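/- For n ≥ 1, 1 < p < ∞, and exponents α, β with −n < β ≤ α < n(p−1) (or more generally −n < α, β < n(p−1)), the weight w_{α,β}(x) = |x|^α for |x| ≤ 1 and |x|^β for |x| > 1 belongs to the Muckenhoupt class A_p(ℝⁿ). -/

import Mathlib

set_option maxHeartbeats 1000000

open MeasureTheory

/-- The glued power weight `w_{α,β}`. -/
noncomputable def wab (n : ℕ) (α β : ℝ) (x : EuclideanSpace ℝ (Fin n)) : ℝ :=
  if ‖x‖ ≤ 1 then ‖x‖ ^ α else ‖x‖ ^ β

open Metric Set
open scoped ENNReal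

lemma my_nontrivial (n : ℕ) (hn : 1 ≤ n) : Nontrivial (EuclideanSpace ℝ (Fin n)) := by
  refine nontrivial_of_ne (EuclideanSpace.single ⟨0, hn⟩ (1:ℝ)) 0 ?_
  intro h
  have := congrArg (fun v => v ⟨0, hn⟩) h
  simp [EuclideanSpace.single_apply] at this

lemma measurable_rpow_const' (γ : ℝ) : Measurable fun t : ℝ => t ^ γ :=
  measurable_of_measurable_on_compl_singleton 0
    (Continuous.measurable <| continuousOn_iff_continuous_restrict.1 <|
      fun t ht => (Real.continuousAt_rpow_const t γ (Or.inl ht)).continuousWithinAt)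

lemma polar (n : ℕ) (hn : 1 ≤ n) (G : ℝ → ℝ≥0∞) (hG : Measurable G) :
    ∫⁻ x, G ‖x‖ ∂(volume : Measure (EuclideanSpace ℝ (Fin n))) =
      (volume : Measure (EuclideanSpace ℝ (Fin n))).toSphere univ *
        ∫⁻ t in Ioi (0:ℝ), ENNReal.ofReal (t ^ (n-1)) * G t := by
  haveI := my_nontrivial n hn
  set E := EuclideanSpace ℝ (Fin n)
  set μ := (volume : Measure E)
  have hdim : Module.finrank ℝ E = n := finrank_euclideanSpace_fin
  have h1 : ∫⁻ x, G ‖x‖ ∂μ = ∫⁻ x in ({0}ᶜ : Set E), G ‖x‖ ∂μ := by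
    rw [MeasureTheory.restrict_compl_singleton]
  have h2 : ∫⁻ x in ({0}ᶜ : Set E), G ‖x‖ ∂μ
      = ∫⁻ x : ({0}ᶜ : Set E), G ‖x.1‖ ∂(μ.comap Subtype.val) :=
    (lintegral_subtype_comap (measurableSet_singleton 0).compl _).symm
  have hmeas : Measurable fun p : sphere (0:E) 1 × Ioi (0:ℝ) => G p.2 :=
    hG.comp (measurable_subtype_coe.comp measurable_snd)
  have h3 : ∫⁻ x : ({0}ᶜ : Set E), G ‖x.1‖ ∂(μ.comap Subtype.val)
      = ∫⁻ p : sphere (0:E) 1 × Ioi (0:ℝ), G p.2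
          ∂(μ.toSphere.prod (.volumeIoiPow (Module.finrank ℝ E - 1))) := by
    rw [← (μ.measurePreserving_homeomorphUnitSphereProd).lintegral_comp hmeas]
    refine lintegral_congr fun x => ?_
    congr 1
    simp [homeomorphUnitSphereProd_apply_snd_coe]
  have h4 : ∫⁻ p : sphere (0:E) 1 × Ioi (0:ℝ), G p.2
          ∂(μ.toSphere.prod (.volumeIoiPow (Module.finrank ℝ E - 1)))
      = μ.toSphere univ * ∫⁻ t : Ioi (0:ℝ), G t ∂(.volumeIoiPow (Module.finrank ℝ E - 1)) := by
    rw [lintegral_prod _ hmeas.aemeasurable]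
    simp [lintegral_const, mul_comm]
  have h5 : ∫⁻ t : Ioi (0:ℝ), G t ∂(Measure.volumeIoiPow (Module.finrank ℝ E - 1))
      = ∫⁻ t in Ioi (0:ℝ), ENNReal.ofReal (t ^ (n-1)) * G t := by
    rw [Measure.volumeIoiPow, lintegral_withDensity_eq_lintegral_mul _
      (by exact ((measurable_subtype_coe.pow_const _).ennreal_ofReal))
      (show Measurable fun t : Ioi (0:ℝ) => G ↑t from hG.comp measurable_subtype_coe)]
    rw [← lintegral_subtype_comap measurableSet_Ioi
      (fun t : ℝ => ENNReal.ofReal (t ^ (n-1)) * G t)]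
    simp [hdim]
  rw [h1, h2, h3, h4, h5]

lemma lint_ball (n : ℕ) (hn : 1 ≤ n) {γ : ℝ} (hγ : -(n:ℝ) < γ) {R : ℝ} (hR : 0 < R) :
    ∫⁻ y in ball (0 : EuclideanSpace ℝ (Fin n)) R, ENNReal.ofReal (‖y‖ ^ γ)
      = (volume : Measure (EuclideanSpace ℝ (Fin n))).toSphere univ *
          ENNReal.ofReal (R ^ ((n:ℝ) + γ) / ((n:ℝ) + γ)) := by
  set E := EuclideanSpace ℝ (Fin n)
  have hnγ : 0 < (n:ℝ) + γ := by linarith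
  set G : ℝ → ℝ≥0∞ := fun t => if t < R then ENNReal.ofReal (t ^ γ) else 0 with hGdef
  have hGmeas : Measurable G := by
    refine Measurable.ite (measurableSet_lt measurable_id measurable_const) ?_ measurable_const
    exact (measurable_rpow_const' γ).ennreal_ofReal
  have key : ∫⁻ y in ball (0:E) R, ENNReal.ofReal (‖y‖ ^ γ) = ∫⁻ x : E, G ‖x‖ := by
    rw [← lintegral_indicator measurableSet_ball]
    refine lintegral_congr fun y => ?_
    by_cases hy : y ∈ ball (0:E) R
    · rw [indicator_of_mem hy]
      rw [mem_ball_zero_iff] at hy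
      simp [hGdef, hy]
    · rw [indicator_of_notMem hy]
      rw [mem_ball_zero_iff, not_lt] at hy
      simp [hGdef, not_lt.2 hy]
  rw [key, polar n hn G hGmeas]
  congr 1
  have congr1 : ∫⁻ t in Ioi (0:ℝ), ENNReal.ofReal (t ^ (n-1)) * G t
      = ∫⁻ t in Ioi (0:ℝ), (Ioo (0:ℝ) R).indicator
          (fun t => ENNReal.ofReal (t ^ ((n:ℝ) - 1 + γ))) t := by
    refine setLIntegral_congr_fun measurableSet_Ioi (fun t ht => ?_)
    rw [mem_Ioi] at ht
    by_cases htR : t < R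
    · rw [indicator_of_mem (mem_Ioo.mpr ⟨ht, htR⟩)]
      simp only [hGdef, if_pos htR]
      rw [← ENNReal.ofReal_mul (by positivity)]
      congr 1
      rw [← Real.rpow_natCast t (n-1), ← Real.rpow_add ht]
      congr 1
      push_cast [Nat.cast_sub hn]
      ring
    · rw [indicator_of_notMem (by simp [htR])]
      simp [hGdef, htR]
  rw [congr1, lintegral_indicator measurableSet_Ioo, Measure.restrict_restrict measurableSet_Ioo,
    inter_eq_left.mpr Ioo_subset_Ioi_self]
  have hint : IntegrableOn (fun t : ℝ => t ^ ((n:ℝ) - 1 + γ)) (Ioo 0 R) := by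
    have h1 : (-1:ℝ) < (n:ℝ) - 1 + γ := by linarith
    exact (intervalIntegral.intervalIntegrable_rpow' h1 (a := 0) (b := R)).1.mono_set
      Ioo_subset_Ioc_self
  rw [← ofReal_integral_eq_lintegral_ofReal hint
    (ae_restrict_of_forall_mem measurableSet_Ioo fun t ht => Real.rpow_nonneg ht.1.le _)]
  congr 1
  rw [setIntegral_congr_set Ioo_ae_eq_Ioc, ← intervalIntegral.integral_of_le hR.le,
    integral_rpow (Or.inl (by linarith))]
  rw [Real.zero_rpow (by linarith : (n:ℝ) - 1 + γ + 1 ≠ 0)]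
  ring_nf

lemma integrableOn_ball_zero (n : ℕ) (hn : 1 ≤ n) {γ : ℝ} (hγ : -(n:ℝ) < γ) {R : ℝ}
    (hR : 0 < R) :
    IntegrableOn (fun y : EuclideanSpace ℝ (Fin n) => ‖y‖ ^ γ) (ball 0 R) := by
  constructor
  · exact ((measurable_rpow_const' γ).comp measurable_norm).aestronglyMeasurable
  · rw [hasFiniteIntegral_iff_ofReal (ae_of_all _ fun y => Real.rpow_nonneg (norm_nonneg y) _)]
    rw [lint_ball n hn hγ hR]
    exact ENNReal.mul_lt_top (measure_lt_top _ _) ENNReal.ofReal_lt_top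

lemma integrableOn_ball (n : ℕ) (hn : 1 ≤ n) {γ : ℝ} (hγ : -(n:ℝ) < γ)
    (x : EuclideanSpace ℝ (Fin n)) {r : ℝ} (hr : 0 < r) :
    IntegrableOn (fun y : EuclideanSpace ℝ (Fin n) => ‖y‖ ^ γ) (ball x r) := by
  refine (integrableOn_ball_zero n hn hγ (R := ‖x‖ + r) (by positivity)).mono_set ?_
  intro y hy
  rw [mem_ball] at hy
  rw [mem_ball_zero_iff]
  calc ‖y‖ ≤ ‖x‖ + ‖y - x‖ := by
        simpa using norm_add_le x (y - x)
    _ < ‖x‖ + r := by rw [dist_eq_norm] at hy; linarith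

lemma avg_bound (n : ℕ) (hn : 1 ≤ n) {γ : ℝ} (hγ : -(n:ℝ) < γ) :
    ∃ C : ℝ, 0 < C ∧ ∀ (x : EuclideanSpace ℝ (Fin n)) (r : ℝ), 0 < r →
      ∫ y in ball x r, ‖y‖ ^ γ ≤ C * (‖x‖ + r) ^ γ * (volume (ball x r)).toReal := by
  set E := EuclideanSpace ℝ (Fin n)
  haveI := my_nontrivial n hn
  have hnγ : 0 < (n:ℝ) + γ := by linarith
  have const_bound : ∀ (x : E) (r K : ℝ), 0 < r → 0 ≤ K → (∀ y ∈ ball x r, ‖y‖ ^ γ ≤ K) →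
      ∫ y in ball x r, ‖y‖ ^ γ ≤ K * (volume (ball x r)).toReal := by
    intro x r K hr hK h
    refine le_trans (le_abs_self _) ?_
    rw [← Real.norm_eq_abs]
    refine norm_setIntegral_le_of_norm_le_const_ae' measure_ball_lt_top
      (ae_of_all _ fun y hy => ?_)
    rw [Real.norm_eq_abs, abs_of_nonneg (Real.rpow_nonneg (norm_nonneg _) _)]
    exact h y hy
  rcases le_or_gt 0 γ with hγ0 | hγ0
  · refine ⟨1, one_pos, fun x r hr => ?_⟩
    rw [one_mul]
    refine const_bound x r _ hr (Real.rpow_nonneg (by positivity) _) fun y hy => ?_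
    refine Real.rpow_le_rpow (norm_nonneg _) ?_ hγ0
    rw [mem_ball, dist_eq_norm] at hy
    calc ‖y‖ ≤ ‖x‖ + ‖y - x‖ := by simpa using norm_add_le x (y - x)
      _ ≤ ‖x‖ + r := by linarith
  · set v := (volume (ball (0:E) 1)).toReal with hv
    have hvpos : 0 < v := ENNReal.toReal_pos (measure_ball_pos _ _ one_pos).ne'
      measure_ball_lt_top.ne
    refine ⟨(3:ℝ) ^ (-γ) + (3:ℝ) ^ (n:ℝ) * n / ((n:ℝ) + γ), by positivity, fun x r hr => ?_⟩
    have hs : (0:ℝ) < ‖x‖ + r := by positivity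
    have hsγ : (0:ℝ) < (‖x‖ + r) ^ γ := Real.rpow_pos_of_pos hs _
    have hvol : (volume (ball x r)).toReal = r ^ n * v := by
      rw [Measure.addHaar_ball volume x hr.le, finrank_euclideanSpace_fin,
        ENNReal.toReal_mul, ENNReal.toReal_ofReal (by positivity)]
    have hvolpos : 0 < (volume (ball x r)).toReal := by
      rw [hvol]; positivity
    rcases le_or_gt (2*r) ‖x‖ with hcase | hcase
    · -- far from origin: pointwise bound
      have hpt : ∀ y ∈ ball x r, ‖y‖ ^ γ ≤ (3:ℝ) ^ (-γ) * (‖x‖ + r) ^ γ := by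
        intro y hy
        rw [mem_ball, dist_eq_norm] at hy
        have h1 : (‖x‖ + r) / 3 ≤ ‖y‖ := by
          have : ‖x‖ - ‖y - x‖ ≤ ‖y‖ := by
            have := norm_sub_norm_le y x
            have h2 : ‖y‖ - ‖x‖ ≥ -(‖y - x‖) := by
              have := abs_norm_sub_norm_le y x
              rw [abs_le] at this; linarith [this.1]
            linarith
          linarith
        have h2 : ‖y‖ ^ γ ≤ ((‖x‖ + r) / 3) ^ γ :=
          Real.rpow_le_rpow_of_nonpos (by positivity) h1 hγ0.le
        calc ‖y‖ ^ γ ≤ ((‖x‖ + r) / 3) ^ γ := h2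
          _ = (‖x‖ + r) ^ γ / (3:ℝ) ^ γ := Real.div_rpow hs.le (by norm_num : (0:ℝ) ≤ 3) γ
          _ = (3:ℝ) ^ (-γ) * (‖x‖ + r) ^ γ := by
              rw [Real.rpow_neg (by norm_num)]
              ring
      calc ∫ y in ball x r, ‖y‖ ^ γ ≤ ((3:ℝ) ^ (-γ) * (‖x‖ + r) ^ γ) * (volume (ball x r)).toReal :=
            const_bound x r _ hr (by positivity) hpt
        _ ≤ (((3:ℝ) ^ (-γ) + (3:ℝ) ^ (n:ℝ) * n / ((n:ℝ) + γ)) * (‖x‖ + r) ^ γ) *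
              (volume (ball x r)).toReal := by
            have h3 : (0:ℝ) < (3:ℝ) ^ (n:ℝ) * n / ((n:ℝ) + γ) := by
              have hn' : (0:ℝ) < (n:ℝ) := by exact_mod_cast hn
              positivity
            have := mul_nonneg (mul_nonneg h3.le hsγ.le) hvolpos.le
            nlinarith
        _ = _ := by ring
    · -- near origin: use lintegral over bigger ball
      have hsub : ball x r ⊆ ball (0:E) (3*r) := by
        intro y hy
        rw [mem_ball, dist_eq_norm] at hy
        rw [mem_ball_zero_iff]
        calc ‖y‖ ≤ ‖x‖ + ‖y - x‖ := by simpa using norm_add_le x (y - x)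
          _ < 2*r + r := by linarith
          _ = 3*r := by ring
      have h3r : (0:ℝ) < 3*r := by linarith
      have hfin : ∫⁻ y in ball (0:E) (3*r), ENNReal.ofReal (‖y‖ ^ γ)
          = volume.toSphere univ * ENNReal.ofReal ((3*r) ^ ((n:ℝ) + γ) / ((n:ℝ) + γ)) :=
        lint_ball n hn hγ h3r
      have heq : ∫ y in ball x r, ‖y‖ ^ γ
          = (∫⁻ y in ball x r, ENNReal.ofReal (‖y‖ ^ γ)).toReal := by
        rw [integral_eq_lintegral_of_nonneg_ae
          (ae_of_all _ fun y => Real.rpow_nonneg (norm_nonneg _) _)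
          ((measurable_rpow_const' γ).comp measurable_norm).aestronglyMeasurable]
      have hmono : (∫⁻ y in ball x r, ENNReal.ofReal (‖y‖ ^ γ)).toReal
          ≤ (∫⁻ y in ball (0:E) (3*r), ENNReal.ofReal (‖y‖ ^ γ)).toReal := by
        refine ENNReal.toReal_mono ?_ (lintegral_mono_set hsub)
        rw [hfin]
        exact (ENNReal.mul_lt_top (measure_lt_top _ _) ENNReal.ofReal_lt_top).ne
      have hS : (volume.toSphere (univ : Set (sphere (0:E) 1))).toReal = n * v := by
        rw [Measure.toSphere_apply_univ, finrank_euclideanSpace_fin, ENNReal.toReal_mul]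
        simp [hv]
      have hval : (∫⁻ y in ball (0:E) (3*r), ENNReal.ofReal (‖y‖ ^ γ)).toReal
          = n * v * ((3*r) ^ ((n:ℝ) + γ) / ((n:ℝ) + γ)) := by
        rw [hfin, ENNReal.toReal_mul, hS, ENNReal.toReal_ofReal (by positivity)]
      have hpow : (3*r) ^ ((n:ℝ) + γ) = (3:ℝ) ^ (n:ℝ) * r ^ n * (3*r) ^ γ := by
        rw [Real.rpow_add h3r, Real.mul_rpow (by norm_num) hr.le, Real.rpow_natCast r n]
      have h3rγ : (3*r) ^ γ ≤ (‖x‖ + r) ^ γ := by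
        refine Real.rpow_le_rpow_of_nonpos hs ?_ hγ0.le
        linarith
      calc ∫ y in ball x r, ‖y‖ ^ γ
          ≤ n * v * ((3*r) ^ ((n:ℝ) + γ) / ((n:ℝ) + γ)) := by
            rw [heq, ← hval]; exact hmono
        _ = ((3:ℝ) ^ (n:ℝ) * n / ((n:ℝ) + γ)) * (3*r) ^ γ * (r ^ n * v) := by
            rw [hpow]; field_simp
        _ ≤ ((3:ℝ) ^ (n:ℝ) * n / ((n:ℝ) + γ)) * (‖x‖ + r) ^ γ * (r ^ n * v) := by
            have hcoef : (0:ℝ) ≤ (3:ℝ) ^ (n:ℝ) * n / ((n:ℝ) + γ) := by positivity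
            have hrv : (0:ℝ) ≤ r ^ n * v := by positivity
            exact mul_le_mul_of_nonneg_right (mul_le_mul_of_nonneg_left h3rγ hcoef) hrv
        _ ≤ (((3:ℝ) ^ (-γ) + (3:ℝ) ^ (n:ℝ) * n / ((n:ℝ) + γ)) * (‖x‖ + r) ^ γ) *
              (r ^ n * v) := by
            have h30 : (0:ℝ) < (3:ℝ) ^ (-γ) := by positivity
            have hrv : (0:ℝ) ≤ r ^ n * v := by positivity
            nlinarith [mul_nonneg (mul_nonneg h30.le hsγ.le) hrv]
        _ = (((3:ℝ) ^ (-γ) + (3:ℝ) ^ (n:ℝ) * n / ((n:ℝ) + γ)) * (‖x‖ + r) ^ γ) *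
              (volume (ball x r)).toReal := by rw [hvol]

/-- For `1 < p` and `-n < β ≤ α < n(p-1)`, the weight `w_{α,β}` is a Muckenhoupt `A_p`
weight on `ℝⁿ`. -/
theorem stmt10 (n : ℕ) (hn : 1 ≤ n) (p α β : ℝ) (hp : 1 < p)
    (hβ : -(n : ℝ) < β) (hβα : β ≤ α) (hα : α < (n : ℝ) * (p - 1)) :
    ∃ M : ℝ, ∀ (x : EuclideanSpace ℝ (Fin n)) (r : ℝ), 0 < r →
      ((∫ y in Metric.ball x r, wab n α β y) / (volume (Metric.ball x r)).toReal) *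
        (((∫ y in Metric.ball x r, (wab n α β y) ^ (-(1:ℝ) / (p - 1))) /
          (volume (Metric.ball x r)).toReal) ^ (p - 1)) ≤ M := by
  haveI := my_nontrivial n hn
  have hp1 : 0 < p - 1 := by linarith
  set σ : ℝ := -(1:ℝ) / (p - 1) with hσ
  have hσneg : σ < 0 := div_neg_of_neg_of_pos (by norm_num) hp1
  have hα' : -(n:ℝ) < α := lt_of_lt_of_le hβ hβα
  have hβ' : β < (n:ℝ) * (p - 1) := lt_of_le_of_lt hβα hα
  have hασ : -(n:ℝ) < α * σ := by
    have h1 : α * σ = -(α / (p-1)) := by rw [hσ]; field_simp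
    rw [h1, neg_lt_neg_iff, div_lt_iff₀ hp1]
    linarith [hα]
  have hβσ : -(n:ℝ) < β * σ := by
    have h1 : β * σ = -(β / (p-1)) := by rw [hσ]; field_simp
    rw [h1, neg_lt_neg_iff, div_lt_iff₀ hp1]
    linarith [hβ']
  obtain ⟨Ca, hCa, Ha⟩ := avg_bound n hn hα'
  obtain ⟨Cb, hCb, Hb⟩ := avg_bound n hn hβ
  obtain ⟨Cc, hCc, Hc⟩ := avg_bound n hn hασ
  obtain ⟨Cd, hCd, Hd⟩ := avg_bound n hn hβσ
  refine ⟨(max Ca Cb) * (Cc + Cd) ^ (p - 1), fun x r hr => ?_⟩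
  have hs : (0:ℝ) < ‖x‖ + r := by positivity
  set s : ℝ := ‖x‖ + r with hsdef
  set VB := (volume (Metric.ball x r)).toReal with hVBdef
  have hVB : 0 < VB := ENNReal.toReal_pos (measure_ball_pos _ _ hr).ne' measure_ball_lt_top.ne
  -- pointwise facts
  have hw_nonneg : ∀ y, 0 ≤ wab n α β y := by
    intro y; unfold wab; split <;> exact Real.rpow_nonneg (norm_nonneg _) _
  have hwα : ∀ y, wab n α β y ≤ ‖y‖ ^ α := by
    intro y; unfold wab; split
    · exact le_refl _
    · rename_i h
      push_neg at h
      exact Real.rpow_le_rpow_of_exponent_le h.le hβα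
  have hwβ : ∀ y : EuclideanSpace ℝ (Fin n), y ≠ 0 → wab n α β y ≤ ‖y‖ ^ β := by
    intro y hy; unfold wab; split
    · rename_i h
      exact Real.rpow_le_rpow_of_exponent_ge (norm_pos_iff.mpr hy) h hβα
    · exact le_refl _
  have hwσ : ∀ y : EuclideanSpace ℝ (Fin n),
      wab n α β y ^ σ ≤ ‖y‖ ^ (α * σ) + ‖y‖ ^ (β * σ) := by
    intro y; unfold wab; split
    · rw [← Real.rpow_mul (norm_nonneg _)]
      exact le_add_of_nonneg_right (Real.rpow_nonneg (norm_nonneg _) _)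
    · rw [← Real.rpow_mul (norm_nonneg _)]
      exact le_add_of_nonneg_left (Real.rpow_nonneg (norm_nonneg _) _)
  have hwmeas : Measurable (wab n α β) := by
    unfold wab
    exact Measurable.ite (measurableSet_le measurable_norm measurable_const)
      ((measurable_rpow_const' α).comp measurable_norm)
      ((measurable_rpow_const' β).comp measurable_norm)
  -- integrability
  have Iα := integrableOn_ball n hn hα' x hr
  have Iβ := integrableOn_ball n hn hβ x hr
  have Ic := integrableOn_ball n hn hασ x hr
  have Id := integrableOn_ball n hn hβσ x hr
  have Iw : IntegrableOn (wab n α β) (Metric.ball x r) := by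
    refine Integrable.mono Iα hwmeas.aestronglyMeasurable (ae_of_all _ fun y => ?_)
    rw [Real.norm_eq_abs, Real.norm_eq_abs, abs_of_nonneg (hw_nonneg y),
      abs_of_nonneg (Real.rpow_nonneg (norm_nonneg _) _)]
    exact hwα y
  have Iwσ : IntegrableOn (fun y => wab n α β y ^ σ) (Metric.ball x r) := by
    refine Integrable.mono (Ic.add Id) ((measurable_rpow_const' σ).comp hwmeas).aestronglyMeasurable
      (ae_of_all _ fun y => ?_)
    simp only [Pi.add_apply]
    have h1 : (0:ℝ) ≤ wab n α β y ^ σ := Real.rpow_nonneg (hw_nonneg y) _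
    have h2 : (0:ℝ) ≤ ‖y‖ ^ (α * σ) + ‖y‖ ^ (β * σ) :=
      add_nonneg (Real.rpow_nonneg (norm_nonneg _) _) (Real.rpow_nonneg (norm_nonneg _) _)
    rw [Real.norm_eq_abs, Real.norm_eq_abs, abs_of_nonneg h1, abs_of_nonneg h2]
    exact hwσ y
  -- integral bounds
  have h1 : ∫ y in Metric.ball x r, wab n α β y ≤ Ca * s ^ α * VB :=
    le_trans (integral_mono Iw Iα hwα) (Ha x r hr)
  have h2 : ∫ y in Metric.ball x r, wab n α β y ≤ Cb * s ^ β * VB := by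
    refine le_trans (integral_mono_ae Iw Iβ ?_) (Hb x r hr)
    refine ae_restrict_of_ae ?_
    have h0 : ∀ᵐ (y : EuclideanSpace ℝ (Fin n)) ∂volume, y ∉ ({0} : Set _) :=
      (Set.countable_singleton _).ae_notMem _
    filter_upwards [h0] with y hy0
    exact hwβ y (by simpa using hy0)
  have h3 : ∫ y in Metric.ball x r, wab n α β y ^ σ
      ≤ Cc * s ^ (α * σ) * VB + Cd * s ^ (β * σ) * VB := by
    calc ∫ y in Metric.ball x r, wab n α β y ^ σ
        ≤ ∫ y in Metric.ball x r, (‖y‖ ^ (α * σ) + ‖y‖ ^ (β * σ)) :=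
          integral_mono Iwσ (Ic.add Id) hwσ
      _ = (∫ y in Metric.ball x r, ‖y‖ ^ (α * σ)) + ∫ y in Metric.ball x r, ‖y‖ ^ (β * σ) :=
          integral_add Ic Id
      _ ≤ _ := add_le_add (Hc x r hr) (Hd x r hr)
  -- averages
  set m : ℝ := min (s ^ α) (s ^ β) with hmdef
  have hm : 0 < m := lt_min (Real.rpow_pos_of_pos hs _) (Real.rpow_pos_of_pos hs _)
  have hA1 : (∫ y in Metric.ball x r, wab n α β y) / VB ≤ Ca * s ^ α := by
    rw [div_le_iff₀ hVB]; exact h1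
  have hA2 : (∫ y in Metric.ball x r, wab n α β y) / VB ≤ Cb * s ^ β := by
    rw [div_le_iff₀ hVB]; exact h2
  have hAm : (∫ y in Metric.ball x r, wab n α β y) / VB ≤ max Ca Cb * m := by
    rcases min_le_iff.mp (le_refl m) with _ | _
    all_goals rcases le_total (s ^ α) (s ^ β) with hc | hc
    all_goals rw [hmdef]
    · rw [min_eq_left hc]
      exact le_trans hA1 (mul_le_mul_of_nonneg_right (le_max_left _ _)
        (Real.rpow_pos_of_pos hs _).le)
    · rw [min_eq_right hc]
      exact le_trans hA2 (mul_le_mul_of_nonneg_right (le_max_right _ _)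
        (Real.rpow_pos_of_pos hs _).le)
    · rw [min_eq_left hc]
      exact le_trans hA1 (mul_le_mul_of_nonneg_right (le_max_left _ _)
        (Real.rpow_pos_of_pos hs _).le)
    · rw [min_eq_right hc]
      exact le_trans hA2 (mul_le_mul_of_nonneg_right (le_max_right _ _)
        (Real.rpow_pos_of_pos hs _).le)
  have hBm : (∫ y in Metric.ball x r, wab n α β y ^ σ) / VB ≤ (Cc + Cd) * m ^ σ := by
    rw [div_le_iff₀ hVB]
    have hα2 : s ^ (α * σ) ≤ m ^ σ := by
      rw [Real.rpow_mul hs.le]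
      exact Real.rpow_le_rpow_of_nonpos hm (min_le_left _ _) hσneg.le
    have hβ2 : s ^ (β * σ) ≤ m ^ σ := by
      rw [Real.rpow_mul hs.le]
      exact Real.rpow_le_rpow_of_nonpos hm (min_le_right _ _) hσneg.le
    have : Cc * s ^ (α * σ) * VB + Cd * s ^ (β * σ) * VB ≤ (Cc + Cd) * m ^ σ * VB := by
      have e1 : Cc * s ^ (α * σ) ≤ Cc * m ^ σ := mul_le_mul_of_nonneg_left hα2 hCc.le
      have e2 : Cd * s ^ (β * σ) ≤ Cd * m ^ σ := mul_le_mul_of_nonneg_left hβ2 hCd.le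
      nlinarith [hVB]
    linarith [h3]
  have hAnn : 0 ≤ (∫ y in Metric.ball x r, wab n α β y) / VB :=
    div_nonneg (setIntegral_nonneg measurableSet_ball fun y _ => hw_nonneg y) hVB.le
  have hBnn : 0 ≤ (∫ y in Metric.ball x r, wab n α β y ^ σ) / VB :=
    div_nonneg (setIntegral_nonneg measurableSet_ball fun y _ =>
      Real.rpow_nonneg (hw_nonneg y) _) hVB.le
  have hBpow : ((∫ y in Metric.ball x r, wab n α β y ^ σ) / VB) ^ (p - 1)
      ≤ ((Cc + Cd) * m ^ σ) ^ (p - 1) := Real.rpow_le_rpow hBnn hBm (by linarith)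
  have hprod : ((∫ y in Metric.ball x r, wab n α β y) / VB) *
      (((∫ y in Metric.ball x r, wab n α β y ^ σ) / VB) ^ (p - 1))
      ≤ (max Ca Cb * m) * (((Cc + Cd) * m ^ σ) ^ (p - 1)) := by
    refine mul_le_mul hAm hBpow (Real.rpow_nonneg hBnn _) ?_
    have : 0 < max Ca Cb := lt_max_of_lt_left hCa
    positivity
  have hM : (max Ca Cb * m) * (((Cc + Cd) * m ^ σ) ^ (p - 1))
      = max Ca Cb * (Cc + Cd) ^ (p - 1) := by
    rw [Real.mul_rpow (by positivity) (Real.rpow_nonneg hm.le _), ← Real.rpow_mul hm.le]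
    have hσp : σ * (p - 1) = -1 := by rw [hσ]; field_simp
    rw [hσp, Real.rpow_neg_one]
    field_simp
  exact le_trans hprod (le_of_eq hM)
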